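/- Let u = x_1^{a_1}···x_n^{a_n} be a monomial of degree d with a_1 > 0, let L^f(u) = {w monomial of degree d : w ≤_lex u} be the final lexsegment defined by u, and let I = (L^f(u)). Then depth(S/I) = 0. -/

import Mathlib

open MvPolynomial

/-- Exponent vectors of monomials in `n` variables; index `i` corresponds to the variable
`x_{i+1}`, so that the `toLex` order on exponent vectors is the lexicographic order on
monomials with `x_1 > x_2 > ⋯ > x_n`. -/
abbrev Mon (n : ℕ) := Fin n →₀ ℕ

/-- The degree of a monomial. -/
def monDeg {n : ℕ} (m : Mon n) : ℕ := ∑ i, m i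

/-- The lexsegment `L(u,v)`: monomials of degree `d` with `u ≥_lex w ≥_lex v`. -/
def lexSeg {n : ℕ} (d : ℕ) (u v : Mon n) : Set (Mon n) :=
  {w | monDeg w = d ∧ toLex v ≤ toLex w ∧ toLex w ≤ toLex u}

/-- The monomial ideal generated by a set of monomials. -/
noncomputable def monomialIdeal {n : ℕ} (k : Type*) [Field k] (T : Set (Mon n)) :
    Ideal (MvPolynomial (Fin n) k) :=
  Ideal.span ((fun m => (monomial m (1 : k) : MvPolynomial (Fin n) k)) '' T)

/-- The order `≺` on monomials of a fixed degree: `w ≺ w'` iff `ν₁(w) < ν₁(w')`, or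
`ν₁(w) = ν₁(w')` and `w >_lex w'`. -/
def prec {n : ℕ} [NeZero n] (z w : Mon n) : Prop :=
  z 0 < w 0 ∨ (z 0 = w 0 ∧ toLex w < toLex z)

/-- A set `T` of monomials, totally ordered by a relation `r`, generates an ideal with linear
quotients with respect to `r` if for every `w ∈ T` the colon ideal of the ideal generated by
the earlier monomials `{z ∈ T | r z w}` by `w` is generated by a subset of the variables. -/
noncomputable def hasLinearQuotientsWrt {n : ℕ} (k : Type*) [Field k] (T : Set (Mon n))
    (r : Mon n → Mon n → Prop) : Prop :=
  ∀ w ∈ T, ∃ V : Set (Fin n),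
    Submodule.colon (monomialIdeal k {z ∈ T | r z w})
        (Ideal.span {(monomial w (1 : k) : MvPolynomial (Fin n) k)}) =
      Ideal.span ((fun i => (X i : MvPolynomial (Fin n) k)) '' V)

/-- `max(m)`: the largest index of a variable dividing the monomial `m`. -/
def maxVar {n : ℕ} [NeZero n] (m : Mon n) : Fin n := WithBot.unbotD 0 m.support.max

/-- The shadow of a set of monomials. -/
def shad {n : ℕ} (T : Set (Mon n)) : Set (Mon n) :=
  {m | ∃ t ∈ T, ∃ i : Fin n, m = t + Finsupp.single i 1}

/-- A set of monomials is a lexsegment if it is of the form `L(u,v)`. -/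
def IsLexSegSet {n : ℕ} (T : Set (Mon n)) : Prop :=
  ∃ (e : ℕ) (u v : Mon n), monDeg u = e ∧ monDeg v = e ∧ toLex v ≤ toLex u ∧ T = lexSeg e u v

/-- A lexsegment is a completely lexsegment if all its iterated shadows are lexsegments. -/
def IsCompletelyLexSeg {n : ℕ} (T : Set (Mon n)) : Prop :=
  ∀ j : ℕ, IsLexSegSet (shad^[j] T)

/-- `set(w)` for `w ∈ L(u,v)`: the set of `s` with `x_s · w ∈ I_{≺ w}`, where `I_{≺ w}` is the
ideal generated by `{z ∈ L(u,v) | z ≺ w}`. -/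
noncomputable def setW {n : ℕ} [NeZero n] (k : Type*) [Field k] (d : ℕ) (u v : Mon n)
    (w : Mon n) : Set (Fin n) :=
  {s | (monomial (w + Finsupp.single s 1) (1 : k) : MvPolynomial (Fin n) k) ∈
    monomialIdeal k {z ∈ lexSeg d u v | prec z w}}

/-- `g` is the value of the decomposition function of `I = (L(u,v))` at the monomial `m`:
`g` is the `≺`-smallest `w' ∈ L(u,v)` such that `m ∈ I_{⪯ w'}`. -/
noncomputable def isDecompOf {n : ℕ} [NeZero n] (k : Type*) [Field k] (d : ℕ) (u v : Mon n)
    (m : Mon n) (g : Mon n) : Prop :=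
  g ∈ lexSeg d u v ∧
  (monomial m (1 : k) : MvPolynomial (Fin n) k) ∈
      monomialIdeal k {z ∈ lexSeg d u v | prec z g ∨ z = g} ∧
  ∀ w' ∈ lexSeg d u v,
    (monomial m (1 : k) : MvPolynomial (Fin n) k) ∈
        monomialIdeal k {z ∈ lexSeg d u v | prec z w' ∨ z = w'} →
      g = w' ∨ prec g w'

/-- Reversing the variables: the `toLex` order on `revMon` exponent vectors is the
lexicographic order induced by `x_n > x_{n-1} > ⋯ > x_1`. -/
def revMon {n : ℕ} (m : Mon n) : Mon n := Finsupp.equivMapDomain Fin.revPerm m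

/-- The depth of `S/I` with respect to the graded maximal ideal `(x_1, …, x_n)`:
the maximal length of an `S/I`-regular sequence of elements of `(x_1, …, x_n)`. -/
noncomputable def ringDepth {n : ℕ} {k : Type*} [Field k]
    (I : Ideal (MvPolynomial (Fin n) k)) : ℕ :=
  sSup {r : ℕ | ∃ rs : List (MvPolynomial (Fin n) k), rs.length = r ∧
    (∀ x ∈ rs, x ∈ Ideal.span (Set.range (X : Fin n → MvPolynomial (Fin n) k))) ∧
    RingTheory.Sequence.IsRegular (MvPolynomial (Fin n) k ⧸ I) rs}

lemma monDeg_add {n : ℕ} (a b : Mon n) : monDeg (a + b) = monDeg a + monDeg b := by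
  simp [monDeg, Finsupp.add_apply, Finset.sum_add_distrib]

lemma monDeg_single {n : ℕ} (i : Fin n) : monDeg (Finsupp.single i 1) = 1 := by
  simp [monDeg, Finsupp.single_apply]

/-- For the ideal generated by a final lexsegment `L^f(u)` with `u = x_1^{a_1} ⋯ x_n^{a_n}`,
`a_1 > 0`, one has `depth S/I = 0`. -/
theorem depth_final_lexsegment {n : ℕ} [NeZero n] (hn : 2 ≤ n) (k : Type*) [Field k]
    (d : ℕ) (hd : 2 ≤ d) (u : Mon n) (hu : monDeg u = d) (ha1 : 0 < u 0) :
    ringDepth (monomialIdeal k {w : Mon n | monDeg w = d ∧ toLex w ≤ toLex u}) = 0 := by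
  set T : Set (Mon n) := {w : Mon n | monDeg w = d ∧ toLex w ≤ toLex u} with hT
  set I : Ideal (MvPolynomial (Fin n) k) := monomialIdeal k T with hI
  have hsle : Finsupp.single (0 : Fin n) 1 ≤ u := Finsupp.single_le_iff.mpr ha1
  set m : Mon n := u - Finsupp.single (0 : Fin n) 1 with hm
  have hmu : m + Finsupp.single (0 : Fin n) 1 = u := tsub_add_cancel_of_le hsle
  have hdegm : monDeg m + 1 = d := by
    have := congrArg monDeg hmu
    rwa [monDeg_add, monDeg_single, hu] at this
  have hm0 : m 0 + 1 = u 0 := by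
    have := congrArg (fun f : Mon n => f 0) hmu
    simpa using this
  have hmem : ∀ i : Fin n, m + Finsupp.single i 1 ∈ T := by
    intro i
    refine ⟨by rw [monDeg_add, monDeg_single]; exact hdegm, ?_⟩
    rcases eq_or_ne i 0 with rfl | hi
    · rw [hmu]
    · refine le_of_lt (Finsupp.Lex.lt_iff.mpr ⟨0, ?_, ?_⟩)
      · intro j hj
        exact absurd hj (by simp [Fin.lt_def])
      · have h0 : (m + Finsupp.single i 1 : Mon n) 0 < u 0 := by
          rw [Finsupp.add_apply, Finsupp.single_apply_eq_zero.mpr (fun h => (hi h.symm).elim)]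
          omega
        exact h0
  have hmnot : (monomial m (1 : k) : MvPolynomial (Fin n) k) ∉ I := by
    intro h
    rw [hI, monomialIdeal, mem_ideal_span_monomial_image] at h
    obtain ⟨si, hsi, hle⟩ := h m (by simp [support_monomial])
    have hd1 : monDeg si ≤ monDeg m :=
      Finset.sum_le_sum fun i _ => Finsupp.le_def.mp hle i
    have := hsi.1
    omega
  have hIne : I ≠ ⊤ := fun h => hmnot (h ▸ Submodule.mem_top)
  haveI : Nontrivial (MvPolynomial (Fin n) k ⧸ I) := Ideal.Quotient.nontrivial_iff.mpr hIne
  have hkey : ∀ x ∈ Ideal.span (Set.range (X : Fin n → MvPolynomial (Fin n) k)),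
      x * monomial m (1 : k) ∈ I := by
    have hcolon : Ideal.span (Set.range (X : Fin n → MvPolynomial (Fin n) k)) ≤
        Submodule.colon I (Ideal.span {(monomial m (1 : k) : MvPolynomial (Fin n) k)}) := by
      rw [Ideal.span_le]
      rintro _ ⟨i, rfl⟩
      rw [SetLike.mem_coe, Ideal.mem_colon_span_singleton]
      have hXmul : (X i : MvPolynomial (Fin n) k) * monomial m 1 =
          monomial (m + Finsupp.single i 1) 1 := by
        rw [X, monomial_mul, one_mul, add_comm]
      rw [hXmul]
      exact Ideal.subset_span ⟨m + Finsupp.single i 1, hmem i, rfl⟩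
    intro x hx
    exact Ideal.mem_colon_span_singleton.mp (hcolon hx)
  have hset : {r : ℕ | ∃ rs : List (MvPolynomial (Fin n) k), rs.length = r ∧
      (∀ x ∈ rs, x ∈ Ideal.span (Set.range (X : Fin n → MvPolynomial (Fin n) k))) ∧
      RingTheory.Sequence.IsRegular (MvPolynomial (Fin n) k ⧸ I) rs} = {0} := by
    ext r
    simp only [Set.mem_setOf_eq, Set.mem_singleton_iff]
    constructor
    · rintro ⟨rs, hlen, hx, hreg⟩
      cases rs with
      | nil => simpa using hlen.symm
      | cons a rest =>
        exfalso
        have hreg' : IsSMulRegular (MvPolynomial (Fin n) k ⧸ I) a :=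
          ((RingTheory.Sequence.isRegular_cons_iff _ _ _).mp hreg).1
        have ha : a ∈ Ideal.span (Set.range (X : Fin n → MvPolynomial (Fin n) k)) :=
          hx a (List.mem_cons_self)
        have h1 : a • (Ideal.Quotient.mk I (monomial m (1 : k))) = a • (0 : _) := by
          have : a • (Ideal.Quotient.mk I (monomial m (1 : k))) =
              Ideal.Quotient.mk I (a * monomial m (1 : k)) := rfl
          rw [this, smul_zero, Ideal.Quotient.eq_zero_iff_mem]
          exact hkey a ha
        have h2 := hreg' h1
        rw [Ideal.Quotient.eq_zero_iff_mem] at h2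
        exact hmnot h2
    · rintro rfl
      exact ⟨[], rfl, by simp, RingTheory.Sequence.IsRegular.nil _ _⟩
  rw [ringDepth, hset, csSup_singleton]
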